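/- Let K be a field of characteristic not 2. Let A = [[a,0],[b,c]] be a 2×2 matrix over K such that for every t in K, the matrix [[a,t],[b,c]] has at most one nonzero eigenvalue in an algebraic closure of K. Then b = 0, and moreover a = c or a = 0 or c = 0. -/

import Mathlib

open Polynomial Matrix

/-- Let `char K ≠ 2` and `A = [[a,0],[b,c]]`. If for every `t ∈ K` the matrix
`[[a,t],[b,c]]` has at most one nonzero eigenvalue in an algebraic closure of `K`, then
`b = 0` and moreover `a = c` or `a = 0` or `c = 0`. -/
theorem stmt4 {K : Type*} [Field K] (hK : (2 : K) ≠ 0) (a b c : K)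
    (h : ∀ t : K,
      ({x : AlgebraicClosure K |
          ((Matrix.charpoly (!![a, t; b, c])).map
            (algebraMap K (AlgebraicClosure K))).IsRoot x} \ {0}).ncard ≤ 1) :
    b = 0 ∧ (a = c ∨ a = 0 ∨ c = 0) := by
  set L := AlgebraicClosure K
  set f : K →+* L := algebraMap K L with hfdef
  have hf : Function.Injective f := f.injective
  have key : ∀ (p : L[X]), p ≠ 0 → ∀ x y : L, p.IsRoot x → p.IsRoot y → x ≠ y → x ≠ 0 →
      y ≠ 0 → ¬ (({z : L | p.IsRoot z} \ {0}).ncard ≤ 1) := by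
    intro p hp x y hx hy hxy hx0 hy0 hle
    have hfin : ({z : L | p.IsRoot z}).Finite := Polynomial.finite_setOf_isRoot hp
    have hsub : ({x, y} : Set L) ⊆ {z : L | p.IsRoot z} \ {0} := by
      rintro z (rfl | rfl)
      · exact ⟨hx, hx0⟩
      · exact ⟨hy, hy0⟩
    have h2 : 2 ≤ ({z : L | p.IsRoot z} \ {0}).ncard := by
      calc 2 = ({x, y} : Set L).ncard := (Set.ncard_pair hxy).symm
        _ ≤ _ := Set.ncard_le_ncard hsub hfin.diff
    omega
  have hmonic : ∀ t : K, ((Matrix.charpoly (!![a, t; b, c])).map f).Monic :=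
    fun t => (Matrix.charpoly_monic _).map f
  have hcp : ∀ t : K, (!![a, t; b, c]).charpoly
      = X ^ 2 - C (a + c) * X + C (a * c - t * b) := by
    intro t
    rw [Matrix.charpoly, Matrix.det_fin_two]
    simp [Matrix.charmatrix_apply_eq, Matrix.charmatrix_apply_ne, C_add, C_sub, C_mul]
    ring
  have hroot : ∀ t : K, ∀ x : L,
      ((Matrix.charpoly (!![a, t; b, c])).map f).IsRoot x ↔
        x ^ 2 - f (a + c) * x + f (a * c - t * b) = 0 := by
    intro t x
    rw [hcp t]
    simp [IsRoot, Polynomial.map_add, Polynomial.map_sub, Polynomial.map_pow,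
      Polynomial.map_mul]
  have h4 : (4 : K) ≠ 0 := by
    have : (4 : K) = 2 * 2 := by norm_num
    rw [this]; exact mul_ne_zero hK hK
  have hb : b = 0 := by
    by_contra hb
    obtain ⟨d, hd0, hd4⟩ : ∃ d : K, d ≠ 0 ∧ 4 * d ≠ (a + c) ^ 2 := by
      by_cases h1 : 4 * 1 = (a + c) ^ 2
      · refine ⟨-1, by norm_num, ?_⟩
        rw [← h1]
        intro hcon
        have : (8 : K) = 0 := by linear_combination -hcon
        have h8 : (8 : K) = 2 * 4 := by norm_num
        rw [h8] at this
        exact h4 (by simpa [hK] using mul_eq_zero.mp this |>.resolve_left hK)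
      · exact ⟨1, one_ne_zero, h1⟩
    set t := (a * c - d) / b with ht
    have hdet : a * c - t * b = d := by rw [ht]; field_simp; ring
    have hdeg : ((Matrix.charpoly (!![a, t; b, c])).map f).degree ≠ 0 := by
      rw [(Matrix.charpoly_monic _).degree_map, Matrix.charpoly_degree_eq_dim]
      simp
    obtain ⟨x, hx⟩ := IsAlgClosed.exists_root _ hdeg
    have hxeq : x ^ 2 - f (a + c) * x + f d = 0 := by
      have := (hroot t x).mp hx
      rwa [hdet] at this
    set y := f (a + c) - x with hy
    have hyroot : ((Matrix.charpoly (!![a, t; b, c])).map f).IsRoot y := by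
      rw [hroot t y, hdet]
      linear_combination hxeq
    have hprod : x * y = f d := by
      rw [hy]; linear_combination -hxeq
    have hfd : f d ≠ 0 := fun hc => hd0 (hf (by simpa using hc))
    have hx0 : x ≠ 0 := fun hc => hfd (by rw [← hprod, hc, zero_mul])
    have hy0 : y ≠ 0 := fun hc => hfd (by rw [← hprod, hc, mul_zero])
    have hxy : x ≠ y := by
      intro hc
      refine hd4 (hf ?_)
      rw [_root_.map_mul, map_pow, map_ofNat]
      have hsum : f (a + c) = x + y := by rw [hy]; ring
      rw [hsum, ← hprod, hc]
      ring
    exact key _ (hmonic t).ne_zero x y hx hyroot hxy hx0 hy0 (h t)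
  refine ⟨hb, ?_⟩
  by_contra hcon
  push_neg at hcon
  obtain ⟨hac, ha0, hc0⟩ := hcon
  have hxr : ((Matrix.charpoly (!![a, (0:K); b, c])).map f).IsRoot (f a) := by
    rw [hroot 0 (f a), hb]
    simp only [map_sub, map_add, _root_.map_mul, map_pow, map_zero]
    ring
  have hyr : ((Matrix.charpoly (!![a, (0:K); b, c])).map f).IsRoot (f c) := by
    rw [hroot 0 (f c), hb]
    simp only [map_sub, map_add, _root_.map_mul, map_pow, map_zero]
    ring
  exact key _ (hmonic 0).ne_zero (f a) (f c) hxr hyr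
    (fun hc => hac (hf hc)) (fun hc => ha0 (hf (by simpa using hc)))
    (fun hc => hc0 (hf (by simpa using hc))) (h 0)
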